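/- Let r | t with r, t positive integers, and let Γ₀(t)(r) = { (a b; c d) ∈ SL(2,ℤ) : a ≡ d ≡ 1 mod t, b ≡ 0 mod t, c ≡ 0 mod r } and Γ(t,r) = { (a b; c d) ∈ SL(2,ℤ) : a ≡ d ≡ 1 mod t, b ≡ 0 mod t², c ≡ 0 mod r }. Then Γ(t,r) is a subgroup of Γ₀(t)(r) of index t. -/

import Mathlib

open scoped MatrixGroups

/-- `Γ₀(t)(r) = { γ ∈ SL(2,ℤ) : a ≡ d ≡ 1 mod t, b ≡ 0 mod t, c ≡ 0 mod r }`. -/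
def Gamma0r (t r : ℕ) : Subgroup SL(2, ℤ) where
  carrier := {A | ((A 0 0 : ℤ) : ZMod t) = 1 ∧ ((A 1 1 : ℤ) : ZMod t) = 1 ∧
    ((A 0 1 : ℤ) : ZMod t) = 0 ∧ ((A 1 0 : ℤ) : ZMod r) = 0}
  one_mem' := by simp
  mul_mem' := by
    rintro A B ⟨a1, a2, a3, a4⟩ ⟨b1, b2, b3, b4⟩
    have hAB : ∀ i j : Fin 2, ((A * B : SL(2, ℤ)) i j : ℤ)
        = A i 0 * B 0 j + A i 1 * B 1 j := by
      intro i j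
      simp [Matrix.mul_apply, Fin.sum_univ_two]
    refine ⟨?_, ?_, ?_, ?_⟩ <;> push_cast [hAB] <;>
      simp [a1, a2, a3, a4, b1, b2, b3, b4]
  inv_mem' := by
    rintro A ⟨a1, a2, a3, a4⟩
    rw [Set.mem_setOf_eq, Matrix.SpecialLinearGroup.SL2_inv_expl]
    refine ⟨?_, ?_, ?_, ?_⟩ <;> push_cast <;> simp [a1, a2, a3, a4]

/-- `Γ(t,r) = { γ ∈ SL(2,ℤ) : a ≡ d ≡ 1 mod t, b ≡ 0 mod t², c ≡ 0 mod r }`. -/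
def GammaTR (t r : ℕ) : Subgroup SL(2, ℤ) where
  carrier := {A | ((A 0 0 : ℤ) : ZMod t) = 1 ∧ ((A 1 1 : ℤ) : ZMod t) = 1 ∧
    ((A 0 1 : ℤ) : ZMod (t ^ 2)) = 0 ∧ ((A 1 0 : ℤ) : ZMod r) = 0}
  one_mem' := by simp
  mul_mem' := by
    rintro A B ⟨a1, a2, a3, a4⟩ ⟨b1, b2, b3, b4⟩
    have hdt : ((t : ℤ)) ∣ ((t ^ 2 : ℕ) : ℤ) := by
      push_cast
      exact dvd_pow_self _ two_ne_zero
    have ha3t : ((A 0 1 : ℤ) : ZMod t) = 0 := by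
      rw [ZMod.intCast_zmod_eq_zero_iff_dvd] at a3 ⊢
      exact dvd_trans hdt a3
    have hb3t : ((B 0 1 : ℤ) : ZMod t) = 0 := by
      rw [ZMod.intCast_zmod_eq_zero_iff_dvd] at b3 ⊢
      exact dvd_trans hdt b3
    have hAB : ∀ i j : Fin 2, ((A * B : SL(2, ℤ)) i j : ℤ)
        = A i 0 * B 0 j + A i 1 * B 1 j := by
      intro i j
      simp [Matrix.mul_apply, Fin.sum_univ_two]
    refine ⟨?_, ?_, ?_, ?_⟩ <;> push_cast [hAB] <;>
      simp [a1, a2, a3, a4, b1, b2, b3, b4, ha3t, hb3t]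
  inv_mem' := by
    rintro A ⟨a1, a2, a3, a4⟩
    rw [Set.mem_setOf_eq, Matrix.SpecialLinearGroup.SL2_inv_expl]
    refine ⟨?_, ?_, ?_, ?_⟩ <;> push_cast <;> simp [a1, a2, a3, a4]


section Aux

variable {t r : ℕ}

lemma Gamma0r_t_dvd_b {A : SL(2, ℤ)} (hA : A ∈ Gamma0r t r) : (t : ℤ) ∣ (A 0 1 : ℤ) := by
  have := hA.2.2.1
  rwa [ZMod.intCast_zmod_eq_zero_iff_dvd] at this

lemma SL2_mul_apply (A B : SL(2, ℤ)) (i j : Fin 2) :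
    ((A * B : SL(2, ℤ)) i j : ℤ) = A i 0 * B 0 j + A i 1 * B 1 j := by
  simp [Matrix.mul_apply, Fin.sum_univ_two]

/-- The map `A ↦ (A 0 1)/t mod t` as a monoid hom from `Γ₀(t)(r)`. -/
def phiTR (t r : ℕ) (ht : 0 < t) : Gamma0r t r →* Multiplicative (ZMod t) where
  toFun A := Multiplicative.ofAdd (((A.1 0 1 : ℤ) / t : ℤ) : ZMod t)
  map_one' := by
    simp
  map_mul' := by
    rintro ⟨A, hA⟩ ⟨B, hB⟩
    obtain ⟨x, hx⟩ := Gamma0r_t_dvd_b hA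
    obtain ⟨y, hy⟩ := Gamma0r_t_dvd_b hB
    have htz : (t : ℤ) ≠ 0 := by exact_mod_cast ht.ne'
    have h1 : ((A * B : SL(2, ℤ)) 0 1 : ℤ) = t * (A 0 0 * y + x * B 1 1) := by
      rw [SL2_mul_apply, hx, hy]; ring
    have : ((A * B : SL(2, ℤ)) 0 1 : ℤ) / t = A 0 0 * y + x * B 1 1 := by
      rw [h1, Int.mul_ediv_cancel_left _ htz]
    simp only [Subgroup.coe_mul, ← ofAdd_add]
    rw [this, hx, hy, Int.mul_ediv_cancel_left _ htz, Int.mul_ediv_cancel_left _ htz]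
    congr 1
    push_cast
    rw [hA.1, hB.2.1]
    ring

end Aux

theorem GammaTR_index_in_Gamma0r (t r : ℕ) (ht : 0 < t) (hr : 0 < r) (hdvd : r ∣ t) :
    GammaTR t r ≤ Gamma0r t r ∧
    ((GammaTR t r).subgroupOf (Gamma0r t r)).index = t := by
  haveI : NeZero t := ⟨ht.ne'⟩
  have htz : (t : ℤ) ≠ 0 := by exact_mod_cast ht.ne'
  have hle : GammaTR t r ≤ Gamma0r t r := by
    rintro A ⟨a1, a2, a3, a4⟩
    refine ⟨a1, a2, ?_, a4⟩
    rw [ZMod.intCast_zmod_eq_zero_iff_dvd] at a3 ⊢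
    refine dvd_trans ?_ a3
    push_cast
    exact dvd_pow_self _ two_ne_zero
  refine ⟨hle, ?_⟩
  have hker : (GammaTR t r).subgroupOf (Gamma0r t r) = (phiTR t r ht).ker := by
    ext ⟨A, hA⟩
    obtain ⟨x, hx⟩ := Gamma0r_t_dvd_b hA
    have hdiv : (A 0 1 : ℤ) / t = x := by rw [hx, Int.mul_ediv_cancel_left _ htz]
    constructor
    · rintro ⟨-, -, h3, -⟩
      rw [ZMod.intCast_zmod_eq_zero_iff_dvd] at h3
      have h3' : ((t : ℤ) * t) ∣ (A 0 1 : ℤ) := by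
        refine dvd_trans ?_ h3; push_cast; ring_nf; exact dvd_refl _
      obtain ⟨k, hk⟩ := h3'
      have hxk : x = t * k := by
        have : (t : ℤ) * x = t * (t * k) := by rw [← hx, hk]; ring
        exact mul_left_cancel₀ htz this
      show Multiplicative.ofAdd (((A 0 1 : ℤ) / t : ℤ) : ZMod t) = 1
      rw [hdiv, hxk]
      push_cast
      simp
    · intro h
      have h' : (((A 0 1 : ℤ) / t : ℤ) : ZMod t) = 0 := by
        have := h
        exact this
      rw [hdiv, ZMod.intCast_zmod_eq_zero_iff_dvd] at h'
      obtain ⟨k, hk⟩ := h'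
      refine ⟨hA.1, hA.2.1, ?_, hA.2.2.2⟩
      rw [ZMod.intCast_zmod_eq_zero_iff_dvd]
      show ((t ^ 2 : ℕ) : ℤ) ∣ (A 0 1 : ℤ)
      rw [hx, hk]
      push_cast
      ring_nf
      exact Dvd.intro k rfl
  rw [hker, Subgroup.index_ker]
  have hsurj : Function.Surjective (phiTR t r ht) := by
    intro c
    set k : ℕ := (Multiplicative.toAdd c).val with hk
    have hdet : (!![(1 : ℤ), t * k; 0, 1]).det = 1 := by
      simp [Matrix.det_fin_two_of]
    refine ⟨⟨⟨!![(1 : ℤ), t * k; 0, 1], hdet⟩, ?_⟩, ?_⟩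
    · refine ⟨by simp, by simp, ?_, by simp⟩
      show (((t : ℤ) * k : ℤ) : ZMod t) = 0
      push_cast; simp
    · show Multiplicative.ofAdd ((((t : ℤ) * k : ℤ) / t : ℤ) : ZMod t) = c
      rw [Int.mul_ediv_cancel_left _ htz]
      push_cast
      rw [hk, ZMod.natCast_val, ZMod.cast_id]
      simp
  rw [MonoidHom.range_eq_top.mpr hsurj, Subgroup.card_top, Nat.card_eq_fintype_card]
  simp [ZMod.card]
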